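/- arXiv:2403.14768 — 2 statements merged into one kernel-verified Lean document; each statement's English description precedes it below -/
import Mathlib

section
/- Define I₃(T) := ∫₀⁴ ln(2T/ε) · tanh(ε/(2T))/ε dε for T > 0. Then there exists a constant C > 0 such that |I₃(T) + (ln(2/T))²/2 − ∫₀^∞ (ln x)²/(2·cosh²(x)) dx| ≤ C·(ln(2/T))²·exp(−4/T) for all T ∈ (0,1). -/
open Real MeasureTheory Set

noncomputable section

/-- The two-dimensional density of states `N₀(ε)`, extended evenly to `(-4,4)`
and by `0` outside. -/
def N0 (ε : ℝ) : ℝ :=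
  if |ε| < 4 then
    (Real.pi ^ 2)⁻¹ * ∫ u in (-2:ℝ)..(2 - |ε|),
      (Real.sqrt (4 - u ^ 2) * Real.sqrt (4 - (u + |ε|) ^ 2))⁻¹
  else 0

/-- The three-dimensional density of states `N_{t_z}(ε)`. -/
def N3 (tz ε : ℝ) : ℝ :=
  Real.pi⁻¹ * ∫ u in (-2:ℝ)..2, N0 (tz * u + ε) / Real.sqrt (4 - u ^ 2)

/-- `tanh (x / y)` with the convention that it equals `1` when `y = 0`. -/
def thQ (x y : ℝ) : ℝ := if y = 0 then 1 else Real.tanh (x / y)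

/-- The tight-binding band relation of the anisotropic 3D model. -/
def bandE (tz k₁ k₂ k₃ : ℝ) : ℝ :=
  -2 * (Real.cos k₁ + Real.cos k₂) - 2 * tz * Real.cos k₃

/-- The integrand of the Néel-temperature equation, interpreted as `U/(4T)` where the band
relation vanishes. -/
def neelIntegrand (U tz T k₁ k₂ k₃ : ℝ) : ℝ :=
  if bandE tz k₁ k₂ k₃ = 0 then U / (4 * T)
  else U * Real.tanh (bandE tz k₁ k₂ k₃ / (2 * T)) / (2 * bandE tz k₁ k₂ k₃)

/-- The equation characterizing the Néel temperature of the anisotropic 3D model. -/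
def neelEq (U tz T : ℝ) : Prop :=
  1 = (∫ k₁ in (-Real.pi)..Real.pi, ∫ k₂ in (-Real.pi)..Real.pi,
        ∫ k₃ in (-Real.pi)..Real.pi, neelIntegrand U tz T k₁ k₂ k₃) / (2 * Real.pi) ^ 3

/-- The antiferromagnetic mean-field (gap) equation of the anisotropic 3D model. -/
def gapEq (U tz T Δ : ℝ) : Prop :=
  1 = (∫ k₁ in (-Real.pi)..Real.pi, ∫ k₂ in (-Real.pi)..Real.pi,
        ∫ k₃ in (-Real.pi)..Real.pi,
          U * thQ (Real.sqrt (Δ ^ 2 + bandE tz k₁ k₂ k₃ ^ 2)) (2 * T)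
            / (2 * Real.sqrt (Δ ^ 2 + bandE tz k₁ k₂ k₃ ^ 2))) / (2 * Real.pi) ^ 3

/-- The 2D band relation. -/
def bandE2 (k₁ k₂ : ℝ) : ℝ := -2 * (Real.cos k₁ + Real.cos k₂)

/-- The equation characterizing the 2D Néel temperature. -/
def neelEq2 (U T : ℝ) : Prop :=
  1 = (∫ k₁ in (-Real.pi)..Real.pi, ∫ k₂ in (-Real.pi)..Real.pi,
        (if bandE2 k₁ k₂ = 0 then U / (4 * T)
         else U * Real.tanh (bandE2 k₁ k₂ / (2 * T)) / (2 * bandE2 k₁ k₂))) / (2 * Real.pi) ^ 2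

/-- The 2D antiferromagnetic mean-field (gap) equation. -/
def gapEq2 (U T Δ : ℝ) : Prop :=
  1 = (∫ k₁ in (-Real.pi)..Real.pi, ∫ k₂ in (-Real.pi)..Real.pi,
        U * thQ (Real.sqrt (Δ ^ 2 + bandE2 k₁ k₂ ^ 2)) (2 * T)
          / (2 * Real.sqrt (Δ ^ 2 + bandE2 k₁ k₂ ^ 2))) / (2 * Real.pi) ^ 2

/-- The BCS-type function `J(x,y)`. -/
def Jfun (x y : ℝ) : ℝ :=
  ∫ ε in Set.Ioi (0:ℝ),
    (thQ (Real.sqrt (x ^ 2 + ε ^ 2)) (2 * y) / Real.sqrt (x ^ 2 + ε ^ 2)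
      - Real.tanh (ε / 2) / ε)

/-- `f` is the BCS gap-ratio function: for every `y ∈ [0,1)`, `f y` is the unique positive
solution `x` of `J(x,y) = 0`. -/
def IsBCS (f : ℝ → ℝ) : Prop :=
  ∀ y ∈ Set.Ico (0:ℝ) 1,
    0 < f y ∧ Jfun (f y) y = 0 ∧ ∀ x, 0 < x → Jfun x y = 0 → x = f y

/-- The function `I₃(T)` of Lemma 5.3. -/
def I3 (T : ℝ) : ℝ :=
  ∫ ε in Set.Ioo (0:ℝ) 4, Real.log (2 * T / ε) * Real.tanh (ε / (2 * T)) / ε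

def hf (x : ℝ) : ℝ := -Real.log x * Real.tanh x / x

def pf (x : ℝ) : ℝ := Real.log x ^ 2 / (2 * Real.cosh x ^ 2)

namespace I3Aux
open Filter

lemma continuous_tanh : Continuous Real.tanh := by
  have h : Real.tanh = fun x => Real.sinh x / Real.cosh x := funext Real.tanh_eq_sinh_div_cosh
  rw [h]
  exact Real.continuous_sinh.div Real.continuous_cosh fun x => (Real.cosh_pos x).ne'

lemma tanh_le_one (x : ℝ) : Real.tanh x ≤ 1 := by
  rw [Real.tanh_eq_sinh_div_cosh, div_le_one (Real.cosh_pos x)]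
  nlinarith [Real.cosh_sub_sinh x, Real.exp_pos (-x)]

lemma tanh_nonneg {x : ℝ} (hx : 0 ≤ x) : 0 ≤ Real.tanh x := by
  rw [Real.tanh_eq_sinh_div_cosh]
  exact div_nonneg (Real.sinh_nonneg_iff.2 hx) (Real.cosh_pos x).le

lemma tanh_le_self {x : ℝ} (hx : 0 ≤ x) : Real.tanh x ≤ x := by
  have key : Real.sinh x ≤ x * Real.cosh x := by
    set g : ℝ → ℝ := fun t => t * Real.cosh t - Real.sinh t with hg
    have hd : ∀ t : ℝ, HasDerivAt g (t * Real.sinh t) t := by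
      intro t
      have h1 := (hasDerivAt_id t).mul (Real.hasDerivAt_cosh t)
      have h2 := h1.sub (Real.hasDerivAt_sinh t)
      refine h2.congr_deriv ?_
      simp only [id]; ring
    have hmono : MonotoneOn g (Set.Ici (0:ℝ)) := by
      apply monotoneOn_of_deriv_nonneg (convex_Ici 0)
      · exact fun t _ => ((hd t).continuousAt).continuousWithinAt
      · exact fun t _ => ((hd t).differentiableAt).differentiableWithinAt
      · intro t ht
        rw [interior_Ici] at ht
        rw [(hd t).deriv]
        exact mul_nonneg (le_of_lt ht) (Real.sinh_nonneg_iff.2 (le_of_lt ht))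
    have := hmono (Set.self_mem_Ici) hx hx
    simp [hg] at this
    linarith
  rw [Real.tanh_eq_sinh_div_cosh, div_le_iff₀ (Real.cosh_pos x)]
  linarith

lemma one_sub_tanh_le (x : ℝ) : 1 - Real.tanh x ≤ 2 * Real.exp (-(2 * x)) := by
  have hc := Real.cosh_pos x
  have h1 : 1 - Real.tanh x = Real.exp (-x) / Real.cosh x := by
    rw [Real.tanh_eq_sinh_div_cosh]
    rw [eq_div_iff hc.ne']
    have hexp : (1 - Real.sinh x / Real.cosh x) * Real.cosh x = Real.cosh x - Real.sinh x := by
      field_simp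
    rw [hexp, Real.cosh_sub_sinh]
  have h2 : Real.exp x / 2 ≤ Real.cosh x := by
    rw [Real.cosh_eq]; linarith [Real.exp_pos (-x)]
  rw [h1]
  have h3 : Real.exp (-x) / Real.cosh x ≤ Real.exp (-x) / (Real.exp x / 2) :=
    div_le_div_of_nonneg_left (Real.exp_pos (-x)).le (by positivity) h2
  refine h3.trans (le_of_eq ?_)
  rw [div_eq_iff (by positivity), eq_comm, mul_comm]
  rw [show Real.exp x / 2 * (2 * Real.exp (-(2*x))) = Real.exp x * Real.exp (-(2*x)) by ring]
  rw [← Real.exp_add, show x + -(2*x) = -x by ring]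

lemma sq_le_four_mul_exp {t : ℝ} (ht : 0 ≤ t) : t ^ 2 ≤ 4 * Real.exp t := by
  have h1 := Real.add_one_le_exp (t / 2)
  have h2 : Real.exp (t / 2) * Real.exp (t / 2) = Real.exp t := by
    rw [← Real.exp_add]; ring_nf
  nlinarith [Real.exp_pos (t / 2)]

lemma neg_log_le {x : ℝ} (h1 : 0 < x) : -Real.log x ≤ 2 / Real.sqrt x := by
  have hs : 0 < Real.sqrt x := Real.sqrt_pos.2 h1
  have h2 := Real.log_le_sub_one_of_pos (x := (Real.sqrt x)⁻¹) (by positivity)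
  rw [Real.log_inv, Real.log_sqrt h1.le] at h2
  rw [div_eq_mul_inv]
  linarith

lemma log_sq_le {x : ℝ} (h1 : 0 < x) (h2 : x ≤ 1) : Real.log x ^ 2 ≤ 16 / Real.sqrt x := by
  have hl : Real.log x ≤ 0 := Real.log_nonpos h1.le h2
  have hs : 0 < Real.sqrt x := Real.sqrt_pos.2 h1
  have hss : 0 < Real.sqrt (Real.sqrt x) := Real.sqrt_pos.2 hs
  have h3 : -Real.log x ≤ 4 / Real.sqrt (Real.sqrt x) := by
    have h3' := neg_log_le hs
    rw [Real.log_sqrt h1.le] at h3'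
    have h3'' : -Real.log x ≤ 4 / Real.sqrt (Real.sqrt x) := by
      rw [show (4:ℝ) / Real.sqrt (Real.sqrt x) = 2 * (2 / Real.sqrt (Real.sqrt x)) by ring]
      linarith
    exact h3''
  have h4 : (-Real.log x) ^ 2 ≤ (4 / Real.sqrt (Real.sqrt x)) ^ 2 :=
    pow_le_pow_left₀ (neg_nonneg.2 hl) h3 2
  have h5 : (4 / Real.sqrt (Real.sqrt x)) ^ 2 = 16 / Real.sqrt x := by
    rw [div_pow, Real.sq_sqrt hs.le]; norm_num
  nlinarith


lemma measurable_hf : Measurable hf :=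
  ((Real.measurable_log.neg.mul continuous_tanh.measurable).div measurable_id)

lemma continuousOn_hf : ContinuousOn hf {(0:ℝ)}ᶜ := by
  apply ContinuousOn.div
  · exact (Real.continuousOn_log.neg).mul continuous_tanh.continuousOn
  · exact continuousOn_id
  · exact fun x hx => hx

lemma continuousOn_pf : ContinuousOn pf {(0:ℝ)}ᶜ := by
  apply ContinuousOn.div
  · exact (Real.continuousOn_log.pow 2)
  · exact (continuous_const.mul (Real.continuous_cosh.pow 2)).continuousOn
  · intro x _
    positivity

lemma integrable_invsqrt : IntegrableOn (fun x : ℝ => x ^ (-(1/2) : ℝ)) (Ioc 0 1) := by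
  have h := intervalIntegral.intervalIntegrable_rpow' (a := 0) (b := 1) (r := -(1/2)) (by norm_num)
  exact (intervalIntegrable_iff_integrableOn_Ioc_of_le (by norm_num)).1 h

lemma rpow_half_eq {x : ℝ} (hx : 0 < x) : x ^ (-(1/2) : ℝ) = (Real.sqrt x)⁻¹ := by
  rw [Real.rpow_neg hx.le, Real.sqrt_eq_rpow]

lemma pf_nonneg (x : ℝ) : 0 ≤ pf x := by
  unfold pf; positivity

lemma integrableOn_hf_Ioc01 : IntegrableOn hf (Ioc (0:ℝ) 1) := by
  apply Integrable.mono' ((integrable_invsqrt.const_mul 2))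
  · exact measurable_hf.aestronglyMeasurable
  · rw [ae_restrict_iff' measurableSet_Ioc]
    filter_upwards with x
    intro hx
    have hx0 : 0 < x := hx.1
    have h1 : 0 ≤ -Real.log x := neg_nonneg.2 (Real.log_nonpos hx0.le hx.2)
    have h2 : Real.tanh x / x ≤ 1 := (div_le_one hx0).2 (tanh_le_self hx0.le)
    have h3 : 0 ≤ Real.tanh x / x := div_nonneg (tanh_nonneg hx0.le) hx0.le
    have h4 : hf x = -Real.log x * (Real.tanh x / x) := by
      unfold hf; ring
    have h5 : ‖hf x‖ = hf x := by
      rw [Real.norm_eq_abs, abs_of_nonneg]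
      rw [h4]; exact mul_nonneg h1 h3
    rw [h5, h4]
    calc -Real.log x * (Real.tanh x / x) ≤ -Real.log x * 1 :=
          mul_le_mul_of_nonneg_left h2 h1
      _ = -Real.log x := by ring
      _ ≤ 2 / Real.sqrt x := neg_log_le hx0
      _ = 2 * x ^ (-(1/2) : ℝ) := by rw [rpow_half_eq hx0, div_eq_mul_inv]

lemma integrableOn_hf_Ioc (M : ℝ) : IntegrableOn hf (Ioc (0:ℝ) M) := by
  rcases le_or_gt M 1 with hM | hM
  · exact integrableOn_hf_Ioc01.mono_set (Ioc_subset_Ioc_right hM)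
  · have h2 : IntegrableOn hf (Icc (1:ℝ) M) :=
      (continuousOn_hf.mono (by intro x hx; simp; linarith [hx.1])).integrableOn_Icc
    have := integrableOn_hf_Ioc01.union (h2.mono_set Ioc_subset_Icc_self)
    rwa [Ioc_union_Ioc_eq_Ioc (by norm_num) hM.le] at this

lemma integrableOn_pf_Ioc01 : IntegrableOn pf (Ioc (0:ℝ) 1) := by
  apply Integrable.mono' ((integrable_invsqrt.const_mul 8))
  · exact (continuousOn_pf.mono (by intro x hx; simp; exact ne_of_gt hx.1)).aestronglyMeasurable measurableSet_Ioc
  · rw [ae_restrict_iff' measurableSet_Ioc]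
    filter_upwards with x
    intro hx
    have hx0 : 0 < x := hx.1
    have h5 : ‖pf x‖ = pf x := by rw [Real.norm_eq_abs, abs_of_nonneg (pf_nonneg x)]
    rw [h5]
    have hc : (1:ℝ) ≤ Real.cosh x := Real.one_le_cosh x
    have h6 : pf x ≤ Real.log x ^ 2 / 2 := by
      unfold pf
      apply div_le_div_of_nonneg_left (sq_nonneg _) (by norm_num)
      nlinarith
    calc pf x ≤ Real.log x ^ 2 / 2 := h6
      _ ≤ (16 / Real.sqrt x) / 2 := by linarith [log_sq_le hx0 hx.2]
      _ = 8 * x ^ (-(1/2) : ℝ) := by rw [rpow_half_eq hx0]; field_simp; ring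

lemma integrableOn_pf_Ioi1 : IntegrableOn pf (Ioi (1:ℝ)) := by
  have hbase : IntegrableOn (fun x : ℝ => Real.exp (-1 * x)) (Ioi (1:ℝ)) :=
    exp_neg_integrableOn_Ioi 1 one_pos
  apply Integrable.mono' (hbase.const_mul 8)
  · exact (continuousOn_pf.mono (by intro x hx; simp; intro h; rw [h] at hx; simp at hx; linarith)).aestronglyMeasurable measurableSet_Ioi
  · rw [ae_restrict_iff' measurableSet_Ioi]
    filter_upwards with x
    intro hx
    rw [mem_Ioi] at hx
    have hx0 : (0:ℝ) < x := by linarith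
    have h5 : ‖pf x‖ = pf x := by rw [Real.norm_eq_abs, abs_of_nonneg (pf_nonneg x)]
    rw [h5]
    -- pf x ≤ 8 exp (-x)
    have hl : 0 ≤ Real.log x := Real.log_nonneg (by linarith)
    have hlx : Real.log x ≤ x := (Real.log_le_sub_one_of_pos hx0).trans (by linarith)
    have hlog2 : Real.log x ^ 2 ≤ x ^ 2 := by nlinarith
    have hx2 : x ^ 2 ≤ 4 * Real.exp x := sq_le_four_mul_exp hx0.le
    have hcosh : Real.exp x / 2 ≤ Real.cosh x := by
      rw [Real.cosh_eq]; linarith [Real.exp_pos (-x)]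
    have hden : Real.exp x ^ 2 / 2 ≤ 2 * Real.cosh x ^ 2 := by
      nlinarith [Real.exp_pos x, Real.cosh_pos x]
    have hpos : (0:ℝ) < Real.exp x ^ 2 / 2 := by positivity
    have step : pf x ≤ (4 * Real.exp x) / (Real.exp x ^ 2 / 2) := by
      unfold pf
      apply div_le_div₀ (by positivity) (hlog2.trans hx2) hpos hden
    refine step.trans (le_of_eq ?_)
    have hexp : Real.exp x ≠ 0 := (Real.exp_pos x).ne'
    rw [show (-1 : ℝ) * x = -x by ring, Real.exp_neg]
    field_simp
    ring

lemma integrableOn_pf_Ioi0 : IntegrableOn pf (Ioi (0:ℝ)) := by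
  have := integrableOn_pf_Ioc01.union integrableOn_pf_Ioi1
  rwa [Ioc_union_Ioi_eq_Ioi (by norm_num)] at this

lemma integrableOn_pf_Ioc (M : ℝ) : IntegrableOn pf (Ioc (0:ℝ) M) :=
  integrableOn_pf_Ioi0.mono_set Ioc_subset_Ioi_self


lemma hasDerivAt_tanh (x : ℝ) : HasDerivAt Real.tanh (1 / Real.cosh x ^ 2) x := by
  have hd := (Real.hasDerivAt_sinh x).div (Real.hasDerivAt_cosh x) (Real.cosh_pos x).ne'
  have h : Real.tanh = fun y => Real.sinh y / Real.cosh y := funext Real.tanh_eq_sinh_div_cosh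
  rw [h]
  refine hd.congr_deriv ?_
  rw [show Real.cosh x * Real.cosh x - Real.sinh x * Real.sinh x = 1 by
    linear_combination Real.cosh_sq_sub_sinh_sq x]

lemma hasDerivAt_Phi {x : ℝ} (hx : 0 < x) :
    HasDerivAt (fun y => -(Real.log y ^ 2 * Real.tanh y) / 2) (hf x - pf x) x := by
  have h1 : HasDerivAt Real.log x⁻¹ x := Real.hasDerivAt_log hx.ne'
  have h2 := h1.pow 2
  have h4 := ((h2.mul (hasDerivAt_tanh x)).neg).div_const 2
  refine h4.congr_deriv ?_
  unfold hf pf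
  have hc := (Real.cosh_pos x).ne'
  field_simp
  rw [Pi.pow_apply]
  ring

lemma tendsto_left_endpoint {f : ℝ → ℝ} {A : ℝ} (hA : 0 < A)
    (hi : IntervalIntegrable f volume 0 A) :
    Filter.Tendsto (fun a => ∫ x in a..A, f x) (nhdsWithin 0 (Ioi 0))
      (nhds (∫ x in (0:ℝ)..A, f x)) := by
  have hIcc : IntegrableOn f (uIcc (0:ℝ) A) := by
    rw [uIcc_of_le hA.le]
    rw [integrableOn_Icc_iff_integrableOn_Ioc]
    exact (intervalIntegrable_iff_integrableOn_Ioc_of_le hA.le).1 hi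
  have hc : ContinuousOn (fun a => ∫ x in (0:ℝ)..a, f x) (uIcc 0 A) :=
    intervalIntegral.continuousOn_primitive_interval hIcc
  have h0mem : (0:ℝ) ∈ uIcc (0:ℝ) A := left_mem_uIcc
  have h0 := (hc 0 h0mem).tendsto
  rw [intervalIntegral.integral_same] at h0
  have hle : nhdsWithin (0:ℝ) (Ioi 0) ≤ nhdsWithin 0 (uIcc (0:ℝ) A) := by
    rw [uIcc_of_le hA.le]
    refine le_inf nhdsWithin_le_nhds ?_
    rw [Filter.le_principal_iff]
    exact Filter.mem_of_superset (Ioo_mem_nhdsGT_of_mem ⟨le_refl 0, hA⟩) Ioo_subset_Icc_self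
  have hprim := h0.mono_left hle
  have htend : Filter.Tendsto (fun a => (∫ x in (0:ℝ)..A, f x) - ∫ x in (0:ℝ)..a, f x)
      (nhdsWithin 0 (Ioi 0)) (nhds ((∫ x in (0:ℝ)..A, f x) - 0)) :=
    Filter.Tendsto.sub tendsto_const_nhds hprim
  rw [sub_zero] at htend
  apply htend.congr'
  filter_upwards [Ioo_mem_nhdsGT_of_mem (show (0:ℝ) ∈ Ico (0:ℝ) A from ⟨le_refl 0, hA⟩)]
  intro a ha
  have hia : IntervalIntegrable f volume 0 a := by
    apply hi.mono_set
    rw [uIcc_of_le hA.le, uIcc_of_le ha.1.le]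
    exact Icc_subset_Icc (le_refl 0) ha.2.le
  exact intervalIntegral.integral_interval_sub_left hi hia

lemma tendsto_Phi_zero :
    Filter.Tendsto (fun a => -(Real.log a ^ 2 * Real.tanh a) / 2) (nhdsWithin 0 (Ioi 0))
      (nhds 0) := by
  have base : Filter.Tendsto (fun a : ℝ => Real.log a * a ^ ((1:ℝ)/2)) (nhdsWithin 0 (Ioi 0))
      (nhds 0) := tendsto_log_mul_rpow_nhdsGT_zero (by norm_num)
  have sq : Filter.Tendsto (fun a : ℝ => (Real.log a * a ^ ((1:ℝ)/2)) ^ 2)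
      (nhdsWithin 0 (Ioi 0)) (nhds 0) := by
    have := base.pow 2
    simpa using this
  apply squeeze_zero_norm' _ sq
  filter_upwards [self_mem_nhdsWithin]
  intro a (ha : a ∈ Ioi (0:ℝ))
  rw [mem_Ioi] at ha
  have h1 : (Real.log a * a ^ ((1:ℝ)/2)) ^ 2 = Real.log a ^ 2 * a := by
    rw [mul_pow, ← Real.rpow_natCast (a ^ ((1:ℝ)/2)) 2, ← Real.rpow_mul ha.le]
    norm_num
  rw [h1, Real.norm_eq_abs]
  have h2 : 0 ≤ Real.tanh a := tanh_nonneg ha.le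
  have h3 : Real.tanh a ≤ a := tanh_le_self ha.le
  rw [abs_of_nonpos (by nlinarith [sq_nonneg (Real.log a)]), neg_div, neg_neg]
  rw [div_le_iff₀ (by norm_num : (0:ℝ) < 2)]
  nlinarith [sq_nonneg (Real.log a)]

lemma parts {A : ℝ} (hA : 1 ≤ A) :
    ∫ x in (0:ℝ)..A, hf x
      = -(Real.log A ^ 2 * Real.tanh A) / 2 + ∫ x in (0:ℝ)..A, pf x := by
  have hA0 : (0:ℝ) < A := lt_of_lt_of_le one_pos hA
  have Ih : IntervalIntegrable hf volume 0 A :=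
    (intervalIntegrable_iff_integrableOn_Ioc_of_le hA0.le).2 (integrableOn_hf_Ioc A)
  have Ip : IntervalIntegrable pf volume 0 A :=
    (intervalIntegrable_iff_integrableOn_Ioc_of_le hA0.le).2 (integrableOn_pf_Ioc A)
  set Φ : ℝ → ℝ := fun y => -(Real.log y ^ 2 * Real.tanh y) / 2 with hΦ
  have key : ∀ a ∈ Ioo (0:ℝ) A,
      (∫ x in a..A, hf x) - (∫ x in a..A, pf x) = Φ A - Φ a := by
    intro a ha
    have hca : ContinuousOn (fun x => hf x - pf x) (uIcc a A) := by
      apply ContinuousOn.sub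
      · apply continuousOn_hf.mono
        intro x hx
        rw [uIcc_of_le ha.2.le] at hx
        simp only [mem_compl_iff, mem_singleton_iff]
        intro h; rw [h] at hx; exact absurd hx.1 (not_le.2 ha.1)
      · apply continuousOn_pf.mono
        intro x hx
        rw [uIcc_of_le ha.2.le] at hx
        simp only [mem_compl_iff, mem_singleton_iff]
        intro h; rw [h] at hx; exact absurd hx.1 (not_le.2 ha.1)
    have hderiv : ∀ x ∈ uIcc a A, HasDerivAt Φ (hf x - pf x) x := by
      intro x hx
      rw [uIcc_of_le ha.2.le] at hx
      exact hasDerivAt_Phi (lt_of_lt_of_le ha.1 hx.1)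
    have heq := intervalIntegral.integral_eq_sub_of_hasDerivAt hderiv
      (hca.intervalIntegrable)
    have hih : IntervalIntegrable hf volume a A := by
      apply Ih.mono_set
      rw [uIcc_of_le hA0.le, uIcc_of_le ha.2.le]
      exact Icc_subset_Icc ha.1.le (le_refl A)
    have hip : IntervalIntegrable pf volume a A := by
      apply Ip.mono_set
      rw [uIcc_of_le hA0.le, uIcc_of_le ha.2.le]
      exact Icc_subset_Icc ha.1.le (le_refl A)
    rw [intervalIntegral.integral_sub hih hip] at heq
    exact heq
  have lim1 := (tendsto_left_endpoint hA0 Ih).sub (tendsto_left_endpoint hA0 Ip)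
  have lim2 : Filter.Tendsto (fun a => Φ A - Φ a) (nhdsWithin 0 (Ioi 0))
      (nhds (Φ A - 0)) := Filter.Tendsto.sub tendsto_const_nhds tendsto_Phi_zero
  have evEq : (fun a => (∫ x in a..A, hf x) - ∫ x in a..A, pf x)
      =ᶠ[nhdsWithin (0:ℝ) (Ioi 0)] fun a => Φ A - Φ a := by
    filter_upwards [Ioo_mem_nhdsGT_of_mem (show (0:ℝ) ∈ Ico (0:ℝ) A from ⟨le_refl 0, hA0⟩)]
    exact key
  have := tendsto_nhds_unique (lim1.congr' evEq) lim2
  rw [sub_zero] at this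
  have hΦA : Φ A = -(Real.log A ^ 2 * Real.tanh A) / 2 := rfl
  linarith [this]


lemma I3_subst {T : ℝ} (hT : 0 < T) :
    (∫ ε in Set.Ioo (0:ℝ) 4, Real.log (2 * T / ε) * Real.tanh (ε / (2 * T)) / ε)
      = ∫ x in (0:ℝ)..(2 / T), hf x := by
  have h2T : (0:ℝ) < 2 * T := by linarith
  have e1 : (∫ ε in Set.Ioo (0:ℝ) 4, Real.log (2 * T / ε) * Real.tanh (ε / (2 * T)) / ε)
      = ∫ ε in (0:ℝ)..4, Real.log (2 * T / ε) * Real.tanh (ε / (2 * T)) / ε := by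
    rw [intervalIntegral.integral_of_le (by norm_num : (0:ℝ) ≤ 4),
      MeasureTheory.integral_Ioc_eq_integral_Ioo]
  rw [e1]
  have e2 : EqOn (fun ε => Real.log (2 * T / ε) * Real.tanh (ε / (2 * T)) / ε)
      (fun ε => (2 * T)⁻¹ * hf (ε / (2 * T))) (uIcc (0:ℝ) 4) := by
    intro ε hε
    rw [uIcc_of_le (by norm_num : (0:ℝ) ≤ 4)] at hε
    rcases eq_or_lt_of_le hε.1 with h0 | h0
    · simp only [← h0]
      unfold hf
      norm_num
    · have hε0 : ε ≠ 0 := ne_of_gt h0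
      unfold hf
      have hlog : -Real.log (ε / (2 * T)) = Real.log (2 * T / ε) := by
        rw [← Real.log_inv, inv_div]
      simp only
      rw [hlog]
      field_simp
  rw [intervalIntegral.integral_congr e2, intervalIntegral.integral_const_mul,
    intervalIntegral.integral_comp_div hf h2T.ne']
  rw [smul_eq_mul, show (0:ℝ) / (2 * T) = 0 by simp,
    show (4:ℝ) / (2 * T) = 2 / T by field_simp; ring]
  rw [← mul_assoc, inv_mul_cancel₀ h2T.ne', one_mul]

lemma tail_bound {A : ℝ} (hA : 2 ≤ A) :
    (∫ x in Ioi A, pf x) ≤ (4 * Real.log A ^ 2 + 16) * Real.exp (-(2 * A)) := by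
  have hA0 : (0:ℝ) < A := by linarith
  have hLA : 0 ≤ Real.log A := Real.log_nonneg (by linarith)
  have hbase : IntegrableOn (fun x : ℝ => Real.exp (-1 * x)) (Ioi A) :=
    exp_neg_integrableOn_Ioi A one_pos
  have hInt2 : IntegrableOn
      (fun x : ℝ => (4 * Real.log A ^ 2 + 16) * Real.exp (-A) * Real.exp (-1 * x)) (Ioi A) :=
    hbase.const_mul _
  have key : ∀ x ∈ Ioi A, pf x ≤ (4 * Real.log A ^ 2 + 16) * Real.exp (-A) * Real.exp (-1 * x) := by
    intro x hx
    rw [mem_Ioi] at hx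
    have hx0 : (0:ℝ) < x := by linarith
    have hxA : (0:ℝ) ≤ x - A := by linarith
    -- step1 : pf x ≤ 2 * log x ^ 2 * exp (-(2x))
    have hcosh : Real.exp x / 2 ≤ Real.cosh x := by
      rw [Real.cosh_eq]; linarith [Real.exp_pos (-x)]
    have hch2 : Real.exp x ^ 2 / 4 ≤ Real.cosh x ^ 2 := by
      nlinarith [Real.exp_pos x, Real.cosh_pos x]
    have hexpinv : Real.exp (-(2 * x)) * Real.exp x ^ 2 = 1 := by
      rw [sq, ← Real.exp_add, ← Real.exp_add, show -(2*x) + (x + x) = 0 by ring, Real.exp_zero]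
    have h3 : (1:ℝ)/4 ≤ Real.exp (-(2 * x)) * Real.cosh x ^ 2 := by
      have hmm := mul_le_mul_of_nonneg_left hch2 (Real.exp_pos (-(2*x))).le
      have h4 : Real.exp (-(2 * x)) * (Real.exp x ^ 2 / 4) = 1 / 4 := by
        rw [← mul_div_assoc, hexpinv]
      linarith
    have step1 : pf x ≤ 2 * Real.log x ^ 2 * Real.exp (-(2 * x)) := by
      unfold pf
      rw [div_le_iff₀ (by positivity)]
      nlinarith [h3, sq_nonneg (Real.log x)]
    -- step2 : log x ^2 ≤ 2 logA^2 + 8 exp (x - A)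
    have l1 : Real.log x ≤ Real.log A + (x - A) := by
      have hd : Real.log x - Real.log A = Real.log (x / A) := (Real.log_div hx0.ne' hA0.ne').symm
      have h2 : Real.log (x / A) ≤ x / A - 1 := Real.log_le_sub_one_of_pos (by positivity)
      have h3' : x / A - 1 = (x - A) / A := by field_simp
      have h4 : (x - A) / A ≤ x - A := div_le_self hxA (by linarith)
      linarith
    have hLx : 0 ≤ Real.log x := Real.log_nonneg (by linarith)
    have hsq4 : (x - A) ^ 2 ≤ 4 * Real.exp (x - A) := sq_le_four_mul_exp hxA
    have step2 : Real.log x ^ 2 ≤ 2 * Real.log A ^ 2 + 8 * Real.exp (x - A) := by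
      nlinarith [sq_nonneg (Real.log A - (x - A)), hsq4]
    -- combine
    have e1 : Real.exp (-(2 * x)) ≤ Real.exp (-A) * Real.exp (-1 * x) := by
      rw [← Real.exp_add]
      apply Real.exp_le_exp.2
      linarith
    have e2 : Real.exp (x - A) * Real.exp (-(2 * x)) = Real.exp (-A) * Real.exp (-1 * x) := by
      rw [← Real.exp_add, ← Real.exp_add]
      ring_nf
    have hexp2pos : (0:ℝ) ≤ Real.exp (-(2 * x)) := (Real.exp_pos _).le
    calc pf x ≤ 2 * Real.log x ^ 2 * Real.exp (-(2 * x)) := step1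
      _ ≤ 2 * (2 * Real.log A ^ 2 + 8 * Real.exp (x - A)) * Real.exp (-(2 * x)) := by
          nlinarith [step2, hexp2pos]
      _ = 4 * Real.log A ^ 2 * Real.exp (-(2 * x)) + 16 * (Real.exp (x - A) * Real.exp (-(2 * x))) := by
          ring
      _ ≤ 4 * Real.log A ^ 2 * (Real.exp (-A) * Real.exp (-1 * x))
            + 16 * (Real.exp (-A) * Real.exp (-1 * x)) := by
          rw [e2]
          have := mul_le_mul_of_nonneg_left e1 (by positivity : (0:ℝ) ≤ 4 * Real.log A ^ 2)
          linarith
      _ = (4 * Real.log A ^ 2 + 16) * Real.exp (-A) * Real.exp (-1 * x) := by ring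
  have hmono := setIntegral_mono_on
    (integrableOn_pf_Ioi0.mono_set (Ioi_subset_Ioi hA0.le))
    hInt2 measurableSet_Ioi key
  refine hmono.trans ?_
  rw [MeasureTheory.integral_const_mul]
  have : (∫ x in Ioi A, Real.exp (-1 * x)) = Real.exp (-A) := by
    simp only [neg_one_mul]
    exact integral_exp_neg_Ioi A
  rw [this]
  apply le_of_eq
  rw [mul_assoc, ← Real.exp_add, show -A + -A = -(2*A) by ring]

end I3Aux


/-- Lemma 5.3: `|I₃(T) + (ln(2/T))²/2 - ∫₀^∞ (ln x)²/(2 cosh² x) dx| ≤ C (ln(2/T))² e^{-4/T}`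
for `T ∈ (0,1)`. -/
theorem I3_asymptotics :
    ∃ C > (0:ℝ), ∀ T ∈ Set.Ioo (0:ℝ) 1,
      |I3 T + (Real.log (2 / T)) ^ 2 / 2
          - ∫ x in Set.Ioi (0:ℝ), (Real.log x) ^ 2 / (2 * Real.cosh x ^ 2)|
        ≤ C * (Real.log (2 / T)) ^ 2 * Real.exp (-4 / T) := by
  refine ⟨40, by norm_num, ?_⟩
  rintro T ⟨hT0, hT1⟩
  have hKpf : (∫ x in Set.Ioi (0:ℝ), (Real.log x) ^ 2 / (2 * Real.cosh x ^ 2))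
      = ∫ x in Set.Ioi (0:ℝ), pf x := rfl
  rw [hKpf]
  set A : ℝ := 2 / T with hAdef
  have hA2 : 2 < A := by
    rw [hAdef, lt_div_iff₀ hT0]
    linarith
  have hA0 : (0:ℝ) < A := by linarith
  have hL2 : Real.log 2 ≤ Real.log A := Real.log_le_log (by norm_num) hA2.le
  have hlogA : (0.6931:ℝ) ≤ Real.log A := le_trans (by linarith [Real.log_two_gt_d9]) hL2
  have hexp : Real.exp (-4 / T) = Real.exp (-(2 * A)) := by
    rw [hAdef]
    congr 1
    field_simp
    norm_num
  have hI3 : I3 T = ∫ x in (0:ℝ)..A, hf x := by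
    rw [I3]
    exact I3Aux.I3_subst hT0
  have hparts := I3Aux.parts (A := A) (by linarith)
  have hK : (∫ x in Set.Ioi (0:ℝ), pf x)
      = (∫ x in (0:ℝ)..A, pf x) + ∫ x in Set.Ioi A, pf x := by
    rw [intervalIntegral.integral_of_le hA0.le,
      ← MeasureTheory.setIntegral_union (Set.Ioc_disjoint_Ioi (le_refl A)) measurableSet_Ioi
        (I3Aux.integrableOn_pf_Ioc A)
        (I3Aux.integrableOn_pf_Ioi0.mono_set (Set.Ioi_subset_Ioi hA0.le)),
      Set.Ioc_union_Ioi_eq_Ioi hA0.le]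
  have hEq : I3 T + Real.log A ^ 2 / 2 - (∫ x in Set.Ioi (0:ℝ), pf x)
      = Real.log A ^ 2 * (1 - Real.tanh A) / 2 - ∫ x in Set.Ioi A, pf x := by
    rw [hI3, hparts, hK]
    ring
  rw [hEq, hexp]
  have htail0 : 0 ≤ ∫ x in Set.Ioi A, pf x :=
    MeasureTheory.setIntegral_nonneg measurableSet_Ioi (fun x _ => I3Aux.pf_nonneg x)
  have htail := I3Aux.tail_bound hA2.le
  have htanh1 : Real.tanh A ≤ 1 := I3Aux.tanh_le_one A
  have htanh2 : 1 - Real.tanh A ≤ 2 * Real.exp (-(2 * A)) := I3Aux.one_sub_tanh_le A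
  have hepos : (0:ℝ) < Real.exp (-(2 * A)) := Real.exp_pos _
  have hsq : (0:ℝ) ≤ Real.log A ^ 2 := sq_nonneg _
  have habs : |Real.log A ^ 2 * (1 - Real.tanh A) / 2 - ∫ x in Set.Ioi A, pf x|
      ≤ (5 * Real.log A ^ 2 + 16) * Real.exp (-(2 * A)) := by
    rw [abs_le]
    constructor
    · nlinarith [mul_le_mul_of_nonneg_left htanh2 hsq]
    · nlinarith [mul_nonneg hsq (by linarith : (0:ℝ) ≤ 1 - Real.tanh A)]
  refine habs.trans ?_
  apply mul_le_mul_of_nonneg_right _ hepos.le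
  nlinarith [hlogA]
end
end

section
/- (a) For every r > 0 there exists a constant C > 0 such that ∫₀² (1 + |ln ε|) · tanh(√(x² + ε²)/(2y))/√(x² + ε²) dε ≤ C for all x ∈ [0,2] and y ∈ [0,1] with √(x² + y²) ≥ r. (b) There exist constants c > 0 and r > 0 such that ∫₀² tanh(√(x² + ε²)/(2y))/√(x² + ε²) dε ≥ c·|ln(x² + y²)| for all x ∈ [0,2] and y ∈ [0,1] with 0 < √(x² + y²) ≤ r. -/
open Real MeasureTheory Set

noncomputable section

lemma my_tanh_nonneg {x : ℝ} (hx : 0 ≤ x) : 0 ≤ Real.tanh x := by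
  rw [Real.tanh_eq_sinh_div_cosh]
  exact div_nonneg (Real.sinh_nonneg_iff.2 hx) (Real.cosh_pos x).le

lemma my_tanh_le_one (x : ℝ) : Real.tanh x ≤ 1 := by
  rw [Real.tanh_eq_sinh_div_cosh, div_le_one (Real.cosh_pos x)]
  exact (Real.sinh_lt_cosh x).le

lemma my_tanh_mono {a b : ℝ} (h : a ≤ b) : Real.tanh a ≤ Real.tanh b := by
  rw [Real.tanh_eq_sinh_div_cosh, Real.tanh_eq_sinh_div_cosh,
    div_le_div_iff₀ (Real.cosh_pos a) (Real.cosh_pos b)]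
  have h0 : 0 ≤ Real.sinh (b - a) := Real.sinh_nonneg_iff.2 (sub_nonneg.2 h)
  rw [Real.sinh_sub] at h0
  nlinarith

lemma my_tanh_le_self {x : ℝ} (hx : 0 ≤ x) : Real.tanh x ≤ x := by
  have key : MonotoneOn (fun t : ℝ => t * Real.cosh t - Real.sinh t) (Set.Ici 0) := by
    have hd : ∀ t : ℝ, HasDerivAt (fun t : ℝ => t * Real.cosh t - Real.sinh t)
        (t * Real.sinh t) t := by
      intro t
      have h1 := ((hasDerivAt_id t).mul (Real.hasDerivAt_cosh t)).sub (Real.hasDerivAt_sinh t)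
      refine h1.congr_deriv ?_
      simp only [id_eq, one_mul]
      ring
    apply monotoneOn_of_deriv_nonneg (convex_Ici 0)
    · exact (Continuous.continuousOn (by continuity))
    · intro t ht
      exact (hd t).differentiableAt.differentiableWithinAt
    · intro t ht
      rw [(hd t).deriv]
      simp only [interior_Ici, Set.mem_Ioi] at ht
      exact mul_nonneg ht.le (Real.sinh_nonneg_iff.2 ht.le)
  have h0 := key (Set.self_mem_Ici) (Set.mem_Ici.2 hx) hx
  simp only [Real.cosh_zero, Real.sinh_zero, mul_one, zero_mul, sub_zero] at h0
  rw [Real.tanh_eq_sinh_div_cosh, div_le_iff₀ (Real.cosh_pos x)]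
  linarith

lemma my_abs_log_le {ε : ℝ} (h1 : 0 < ε) (h2 : ε ≤ 2) : |Real.log ε| ≤ 2 / Real.sqrt ε := by
  have hsε : 0 < Real.sqrt ε := Real.sqrt_pos.2 h1
  rcases le_total ε 1 with h | h
  · have hlog : Real.log ε ≤ 0 := Real.log_nonpos h1.le h
    rw [abs_of_nonpos hlog]
    have h3 : Real.log (√ε)⁻¹ ≤ (√ε)⁻¹ - 1 :=
      Real.log_le_sub_one_of_pos (by positivity)
    rw [Real.log_inv, Real.log_sqrt h1.le] at h3
    have : -Real.log ε ≤ 2 * (√ε)⁻¹ := by linarith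
    calc -Real.log ε ≤ 2 * (√ε)⁻¹ := this
      _ = 2 / √ε := by rw [div_eq_mul_inv]
  · have hlog : 0 ≤ Real.log ε := Real.log_nonneg h
    rw [abs_of_nonneg hlog]
    have h3 : Real.log ε ≤ ε - 1 := Real.log_le_sub_one_of_pos h1
    have h4 : Real.sqrt ε ≤ 2 := by
      rw [show (2:ℝ) = Real.sqrt 4 by
        rw [show (4:ℝ) = 2^2 by norm_num, Real.sqrt_sq (by norm_num)]]
      exact Real.sqrt_le_sqrt (by linarith)
    rw [le_div_iff₀ hsε]
    nlinarith

lemma my_integrable_aux : IntegrableOn (fun ε : ℝ => 1 + 2 / Real.sqrt ε) (Set.Ioo (0:ℝ) 2) := by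
  have h1 : IntervalIntegrable (fun x : ℝ => x ^ (-(1/2):ℝ)) volume 0 2 :=
    intervalIntegral.intervalIntegrable_rpow' (by norm_num)
  rw [intervalIntegrable_iff_integrableOn_Ioc_of_le (by norm_num)] at h1
  have h2 : IntegrableOn (fun x : ℝ => x ^ (-(1/2):ℝ)) (Set.Ioo (0:ℝ) 2) :=
    h1.mono_set Set.Ioo_subset_Ioc_self
  have h3 : IntegrableOn (fun x : ℝ => 2 / Real.sqrt x) (Set.Ioo (0:ℝ) 2) := by
    have h2' : IntegrableOn (fun x : ℝ => 2 * x ^ (-(1/2):ℝ)) (Set.Ioo (0:ℝ) 2) :=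
      h2.const_mul 2
    apply h2'.congr_fun ?_ measurableSet_Ioo
    intro x hx
    show 2 * x ^ (-(1/2):ℝ) = 2 / √x
    rw [Real.rpow_neg hx.1.le, Real.sqrt_eq_rpow]
    ring
  exact (integrableOn_const measure_Ioo_lt_top.ne).add h3

lemma my_thQ_nonneg {a y : ℝ} (ha : 0 ≤ a) (hy : 0 ≤ y) : 0 ≤ thQ a y := by
  unfold thQ; split
  · norm_num
  · exact my_tanh_nonneg (div_nonneg ha hy)

lemma my_thQ_le_one (a y : ℝ) : thQ a y ≤ 1 := by
  unfold thQ; split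
  · exact le_rfl
  · exact my_tanh_le_one _

lemma part_a : ∀ r : ℝ, 0 < r → ∃ C > (0:ℝ), ∀ x ∈ Set.Icc (0:ℝ) 2, ∀ y ∈ Set.Icc (0:ℝ) 1,
      r ≤ Real.sqrt (x ^ 2 + y ^ 2) →
      (∫ ε in Set.Ioo (0:ℝ) 2,
        (1 + |Real.log ε|) * thQ (Real.sqrt (x ^ 2 + ε ^ 2)) (2 * y)
          / Real.sqrt (x ^ 2 + ε ^ 2)) ≤ C := by
  intro r hr
  set I : ℝ := ∫ ε in Set.Ioo (0:ℝ) 2, (Real.sqrt 2 / r) * (1 + 2 / Real.sqrt ε) with hI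
  have hg : IntegrableOn (fun ε : ℝ => (Real.sqrt 2 / r) * (1 + 2 / Real.sqrt ε))
      (Set.Ioo (0:ℝ) 2) := Integrable.const_mul my_integrable_aux _
  have hInn : 0 ≤ I := setIntegral_nonneg measurableSet_Ioo (fun ε hε => by positivity)
  refine ⟨I + 1, by linarith, ?_⟩
  intro x hx y hy hxy
  have key : ∀ ε ∈ Set.Ioo (0:ℝ) 2,
      (1 + |Real.log ε|) * thQ (Real.sqrt (x ^ 2 + ε ^ 2)) (2 * y) / Real.sqrt (x ^ 2 + ε ^ 2)
        ≤ (Real.sqrt 2 / r) * (1 + 2 / Real.sqrt ε) := by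
    intro ε hε
    set s := Real.sqrt (x ^ 2 + ε ^ 2) with hs
    have hs0 : 0 < s := Real.sqrt_pos.2 (by nlinarith [hε.1])
    have hsε : ε ≤ s := by
      have h := Real.sqrt_le_sqrt (show ε^2 ≤ x^2+ε^2 by nlinarith [hx.1])
      rwa [Real.sqrt_sq hε.1.le] at h
    have hsx : x ≤ s := by
      have h := Real.sqrt_le_sqrt (show x^2 ≤ x^2+ε^2 by nlinarith [hε.1])
      rwa [Real.sqrt_sq hx.1] at h
    have hT0 : 0 ≤ thQ s (2*y) := my_thQ_nonneg hs0.le (by linarith [hy.1])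
    have hT1 : thQ s (2*y) ≤ 1 := my_thQ_le_one _ _
    have hmax : r ≤ Real.sqrt 2 * max x y := by
      have h1 : x^2 + y^2 ≤ 2 * (max x y)^2 := by
        rcases le_total x y with h | h
        · rw [max_eq_right h]; nlinarith [hx.1]
        · rw [max_eq_left h]; nlinarith [hy.1]
      calc r ≤ Real.sqrt (x^2+y^2) := hxy
        _ ≤ Real.sqrt (2 * (max x y)^2) := Real.sqrt_le_sqrt h1
        _ = Real.sqrt 2 * max x y := by
            rw [Real.sqrt_mul (by norm_num), Real.sqrt_sq (le_max_of_le_left hx.1)]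
    have hkey : thQ s (2*y) / s ≤ Real.sqrt 2 / r := by
      rcases le_total x y with hc | hc
      · rw [max_eq_right hc] at hmax
        have hy0 : 0 < y := by nlinarith [Real.sqrt_nonneg 2, Real.sq_sqrt (by norm_num : (0:ℝ) ≤ 2)]
        have h2y : (2*y) ≠ 0 := by positivity
        have hb : thQ s (2*y) ≤ s / (2*y) := by
          rw [thQ, if_neg h2y]
          exact my_tanh_le_self (by positivity)
        calc thQ s (2*y) / s ≤ (s/(2*y)) / s := by gcongr
          _ = 1/(2*y) := by field_simp [mul_comm]
          _ ≤ Real.sqrt 2 / r := by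
              rw [div_le_div_iff₀ (by positivity) hr]
              nlinarith [Real.sqrt_nonneg 2]
      · rw [max_eq_left hc] at hmax
        have hx0 : 0 < x := by nlinarith [Real.sqrt_nonneg 2, Real.sq_sqrt (by norm_num : (0:ℝ) ≤ 2)]
        calc thQ s (2*y) / s ≤ 1 / s := by gcongr
          _ ≤ 1 / x := by gcongr
          _ ≤ Real.sqrt 2 / r := by
              rw [div_le_div_iff₀ hx0 hr]
              nlinarith [Real.sqrt_nonneg 2]
    calc (1 + |Real.log ε|) * thQ s (2*y) / s
        = (1 + |Real.log ε|) * (thQ s (2*y) / s) := by ring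
      _ ≤ (1 + |Real.log ε|) * (Real.sqrt 2 / r) := by
          apply mul_le_mul_of_nonneg_left hkey (by positivity)
      _ ≤ (1 + 2 / Real.sqrt ε) * (Real.sqrt 2 / r) := by
          apply mul_le_mul_of_nonneg_right _ (by positivity)
          linarith [my_abs_log_le hε.1 hε.2.le]
      _ = (Real.sqrt 2 / r) * (1 + 2 / Real.sqrt ε) := by ring
  have step : (∫ ε in Set.Ioo (0:ℝ) 2,
      (1 + |Real.log ε|) * thQ (Real.sqrt (x ^ 2 + ε ^ 2)) (2 * y)
        / Real.sqrt (x ^ 2 + ε ^ 2)) ≤ I := by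
    rw [hI]
    apply integral_mono_of_nonneg
    · apply Filter.Eventually.of_forall
      intro ε
      have : 0 ≤ thQ (Real.sqrt (x ^ 2 + ε ^ 2)) (2 * y) :=
        my_thQ_nonneg (Real.sqrt_nonneg _) (by linarith [hy.1])
      positivity
    · exact hg
    · exact (ae_restrict_iff' measurableSet_Ioo).2 (Filter.Eventually.of_forall key)
  linarith

lemma my_continuous_tanh : Continuous Real.tanh := by
  have h : Real.tanh = fun x => Real.sinh x / Real.cosh x := by
    funext x; exact Real.tanh_eq_sinh_div_cosh x
  rw [h]
  exact Real.continuous_sinh.div Real.continuous_cosh fun x => (Real.cosh_pos x).ne'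

lemma part_b : ∃ c > (0:ℝ), ∃ r > (0:ℝ), ∀ x ∈ Set.Icc (0:ℝ) 2, ∀ y ∈ Set.Icc (0:ℝ) 1,
      0 < Real.sqrt (x ^ 2 + y ^ 2) → Real.sqrt (x ^ 2 + y ^ 2) ≤ r →
      c * |Real.log (x ^ 2 + y ^ 2)| ≤
        ∫ ε in Set.Ioo (0:ℝ) 2,
          thQ (Real.sqrt (x ^ 2 + ε ^ 2)) (2 * y) / Real.sqrt (x ^ 2 + ε ^ 2) := by
  have htpos : 0 < Real.tanh (1/2) := by
    rw [Real.tanh_eq_sinh_div_cosh]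
    exact div_pos (Real.sinh_pos_iff.2 (by norm_num)) (Real.cosh_pos _)
  have hsqrt2 : (0:ℝ) < Real.sqrt 2 := Real.sqrt_pos.2 (by norm_num)
  refine ⟨Real.tanh (1/2) / (2 * Real.sqrt 2), by positivity, 1/2, by norm_num, ?_⟩
  intro x hx y hy hs0 hsr
  set s := Real.sqrt (x ^ 2 + y ^ 2) with hsdef
  have hx0 : 0 ≤ x := hx.1
  have hy0 : 0 ≤ y := hy.1
  have hys : y ≤ s := by
    have h := Real.sqrt_le_sqrt (show y^2 ≤ x^2+y^2 by nlinarith)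
    rwa [Real.sqrt_sq hy0] at h
  have hxs : x ≤ s := by
    have h := Real.sqrt_le_sqrt (show x^2 ≤ x^2+y^2 by nlinarith)
    rwa [Real.sqrt_sq hx0] at h
  have hs1 : s < 1 := lt_of_le_of_lt hsr (by norm_num)
  set f : ℝ → ℝ := fun ε => thQ (Real.sqrt (x^2+ε^2)) (2*y) / Real.sqrt (x^2+ε^2) with hf
  have hfnn : ∀ ε, 0 ≤ f ε := fun ε =>
    div_nonneg (my_thQ_nonneg (Real.sqrt_nonneg _) (by linarith)) (Real.sqrt_nonneg _)
  have h1 : Continuous fun ε : ℝ => Real.sqrt (x^2+ε^2) :=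
    (continuous_const.add (continuous_pow 2)).sqrt
  -- integrability of f on Ioo 0 2
  have hint : IntegrableOn f (Set.Ioo (0:ℝ) 2) := by
    by_cases hy' : y = 0
    · have hxx : x = s := by
        rw [hsdef, hy']; simp [Real.sqrt_sq hx0]
      have hxpos : 0 < x := by rw [hxx]; exact hs0
      have hcont : Continuous f := by
        have h2 : ∀ ε : ℝ, Real.sqrt (x^2+ε^2) ≠ 0 := fun ε =>
          (Real.sqrt_pos.2 (by positivity)).ne'
        rw [hf]
        simp only [thQ, show (2*y) = 0 by rw [hy']; ring, if_pos rfl]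
        exact continuous_const.div h1 h2
      exact (hcont.integrableOn_Icc).mono_set Set.Ioo_subset_Icc_self
    · have hypos : 0 < y := lt_of_le_of_ne hy0 (Ne.symm hy')
      have h2y : (2*y) ≠ 0 := by positivity
      have hmeas : AEStronglyMeasurable f (volume.restrict (Set.Ioo (0:ℝ) 2)) := by
        have hm : Measurable f := by
          rw [hf]
          simp only [thQ, if_neg h2y]
          exact ((my_continuous_tanh.comp (h1.div_const _)).measurable).div h1.measurable
        exact hm.aestronglyMeasurable
      apply Integrable.mono' (g := fun _ : ℝ => 1/(2*y))
        (integrableOn_const measure_Ioo_lt_top.ne) hmeas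
      rw [ae_restrict_iff' measurableSet_Ioo]
      apply Filter.Eventually.of_forall
      intro ε hε
      have ht0 : 0 < Real.sqrt (x^2+ε^2) := Real.sqrt_pos.2 (by nlinarith [hε.1])
      rw [Real.norm_eq_abs, abs_of_nonneg (hfnn ε)]
      show thQ (Real.sqrt (x^2+ε^2)) (2*y) / Real.sqrt (x^2+ε^2) ≤ 1/(2*y)
      rw [thQ, if_neg h2y]
      calc Real.tanh (Real.sqrt (x^2+ε^2) / (2*y)) / Real.sqrt (x^2+ε^2)
          ≤ (Real.sqrt (x^2+ε^2) / (2*y)) / Real.sqrt (x^2+ε^2) := by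
            gcongr
            exact my_tanh_le_self (by positivity)
        _ = 1/(2*y) := by field_simp [mul_comm]
  -- pointwise lower bound on Ioo s 1
  have hlow : ∀ ε ∈ Set.Ioo s 1,
      (Real.tanh (1/2) / Real.sqrt 2) * ε⁻¹ ≤ f ε := by
    intro ε hε
    have hεs : s < ε := hε.1
    have hε0 : 0 < ε := lt_trans hs0 hεs
    have ht0 : 0 < Real.sqrt (x^2+ε^2) := Real.sqrt_pos.2 (by positivity)
    have htε : ε ≤ Real.sqrt (x^2+ε^2) := by
      have h := Real.sqrt_le_sqrt (show ε^2 ≤ x^2+ε^2 by nlinarith)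
      rwa [Real.sqrt_sq hε0.le] at h
    have ht2 : Real.sqrt (x^2+ε^2) ≤ Real.sqrt 2 * ε := by
      have h := Real.sqrt_le_sqrt (show x^2+ε^2 ≤ 2*ε^2 by nlinarith)
      rwa [show Real.sqrt (2*ε^2) = Real.sqrt 2 * ε by
        rw [Real.sqrt_mul (by norm_num), Real.sqrt_sq hε0.le]] at h
    have hT : Real.tanh (1/2) ≤ thQ (Real.sqrt (x^2+ε^2)) (2*y) := by
      by_cases hy' : (2*y) = 0
      · rw [thQ, if_pos hy']
        exact my_tanh_le_one _
      · rw [thQ, if_neg hy']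
        apply my_tanh_mono
        have hypos : 0 < y := by
          rcases lt_or_eq_of_le hy0 with h | h
          · exact h
          · exact absurd (by rw [← h]; ring) hy'
        rw [le_div_iff₀ (by positivity)]
        have hyt : y ≤ Real.sqrt (x^2+ε^2) := le_trans hys (le_trans hεs.le htε)
        linarith
    calc (Real.tanh (1/2) / Real.sqrt 2) * ε⁻¹
        = Real.tanh (1/2) / (Real.sqrt 2 * ε) := by ring
      _ ≤ thQ (Real.sqrt (x^2+ε^2)) (2*y) / Real.sqrt (x^2+ε^2) :=
          div_le_div₀ (my_thQ_nonneg (Real.sqrt_nonneg _) (by linarith)) hT ht0 ht2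
      _ = f ε := rfl
  have hIoo : Set.Ioo s 1 ⊆ Set.Ioo (0:ℝ) 2 := Set.Ioo_subset_Ioo hs0.le (by norm_num)
  have hint2 : IntegrableOn f (Set.Ioo s 1) := hint.mono_set hIoo
  have hcalc : ∫ ε in Set.Ioo s 1, (Real.tanh (1/2) / Real.sqrt 2) * ε⁻¹
      = (Real.tanh (1/2) / Real.sqrt 2) * (-Real.log s) := by
    rw [integral_const_mul]
    congr 1
    rw [← integral_Ioc_eq_integral_Ioo, ← intervalIntegral.integral_of_le hs1.le,
      integral_inv_of_pos hs0 one_pos, one_div, Real.log_inv]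
  have step1 : (Real.tanh (1/2) / Real.sqrt 2) * (-Real.log s) ≤ ∫ ε in Set.Ioo s 1, f ε := by
    rw [← hcalc]
    apply integral_mono_of_nonneg
    · filter_upwards [ae_restrict_mem measurableSet_Ioo] with ε hε
      have hε0 : 0 < ε := lt_trans hs0 hε.1
      exact mul_nonneg (div_nonneg htpos.le hsqrt2.le) (inv_nonneg.2 hε0.le)
    · exact hint2
    · filter_upwards [ae_restrict_mem measurableSet_Ioo] with ε hε
      exact hlow ε hε
  have step2 : ∫ ε in Set.Ioo s 1, f ε ≤ ∫ ε in Set.Ioo (0:ℝ) 2, f ε :=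
    setIntegral_mono_set hint (Filter.Eventually.of_forall hfnn)
      (HasSubset.Subset.eventuallyLE hIoo)
  have hss : x^2+y^2 = s^2 := (Real.sq_sqrt (by positivity)).symm
  have hlogs : Real.log s < 0 := Real.log_neg hs0 hs1
  have hlog2 : Real.log (x^2+y^2) = 2 * Real.log s := by
    rw [hss, Real.log_pow]; push_cast; ring
  have habs : |Real.log (x^2+y^2)| = -(2*Real.log s) := by
    rw [hlog2, abs_of_neg (by linarith)]
  have hfin : Real.tanh (1/2)/(2*Real.sqrt 2) * (-(2*Real.log s))
      = (Real.tanh (1/2)/Real.sqrt 2) * (-Real.log s) := by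
    field_simp
  calc Real.tanh (1/2) / (2 * Real.sqrt 2) * |Real.log (x^2+y^2)|
      = (Real.tanh (1/2)/Real.sqrt 2) * (-Real.log s) := by rw [habs, hfin]
    _ ≤ ∫ ε in Set.Ioo s 1, f ε := step1
    _ ≤ ∫ ε in Set.Ioo (0:ℝ) 2, f ε := step2

/-- Lemma 6.2: (a) the logarithmically weighted integral of the BCS kernel over `(0,2)` is
bounded when `√(x²+y²)` is bounded away from `0`; (b) near `(x,y) = (0,0)` the unweighted
integral is bounded below by `c |ln(x²+y²)|`. -/
theorem bcs_kernel_integral_bounds :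
    (∀ r : ℝ, 0 < r → ∃ C > (0:ℝ), ∀ x ∈ Set.Icc (0:ℝ) 2, ∀ y ∈ Set.Icc (0:ℝ) 1,
      r ≤ Real.sqrt (x ^ 2 + y ^ 2) →
      (∫ ε in Set.Ioo (0:ℝ) 2,
        (1 + |Real.log ε|) * thQ (Real.sqrt (x ^ 2 + ε ^ 2)) (2 * y)
          / Real.sqrt (x ^ 2 + ε ^ 2)) ≤ C) ∧
    (∃ c > (0:ℝ), ∃ r > (0:ℝ), ∀ x ∈ Set.Icc (0:ℝ) 2, ∀ y ∈ Set.Icc (0:ℝ) 1,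
      0 < Real.sqrt (x ^ 2 + y ^ 2) → Real.sqrt (x ^ 2 + y ^ 2) ≤ r →
      c * |Real.log (x ^ 2 + y ^ 2)| ≤
        ∫ ε in Set.Ioo (0:ℝ) 2,
          thQ (Real.sqrt (x ^ 2 + ε ^ 2)) (2 * y) / Real.sqrt (x ^ 2 + ε ^ 2)) := by
  exact ⟨part_a, part_b⟩
end
end
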